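/- Let (X, 𝓛) be a locally small space. If 𝓤 is an admissible open family, W ⊆ ⋃𝓤, and W ∩ U ∈ 𝓛° for every U ∈ 𝓤, then W ∈ 𝓛° (the regularity axiom holds for (X, 𝓛°, EF(𝓛°, 𝓛))). -/

import Mathlib

open Set

/-- The family of sets compatible with a family `L`:
`L° = {Y : ∀ M ∈ L, Y ∩ M ∈ L}`. -/
def compatible {X : Type*} (L : Set (Set X)) : Set (Set X) :=
  {Y | ∀ M ∈ L, Y ∩ M ∈ L}

/-- The small sets: `Lˢ = {B : ∃ M ∈ L, B ⊆ M}`. -/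
def smalls {X : Type*} (L : Set (Set X)) : Set (Set X) :=
  {B | ∃ M ∈ L, B ⊆ M}

/-- The weakly open sets: `L^wo = {⋃₀ U : U ⊆ L}`. -/
def weaklyOpens {X : Type*} (L : Set (Set X)) : Set (Set X) :=
  {W | ∃ U ⊆ L, W = ⋃₀ U}

/-- `(X, L)` is a locally small space: `∅ ∈ L`, `L` is closed under binary
intersections and unions, and `L` covers `X`. -/
def IsLSS {X : Type*} (L : Set (Set X)) : Prop :=
  ∅ ∈ L ∧ (∀ a ∈ L, ∀ b ∈ L, a ∩ b ∈ L ∧ a ∪ b ∈ L) ∧ ⋃₀ L = Set.univ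

/-- An admissible (locally essentially finite) open family. -/
def Admissible {X : Type*} (L U : Set (Set X)) : Prop :=
  U ⊆ compatible L ∧
    ∀ M ∈ L, ∃ F ⊆ U, F.Finite ∧ (⋃₀ U) ∩ M = (⋃₀ F) ∩ M

lemma finite_sUnion_mem {X : Type*} (L : Set (Set X)) (h : IsLSS L)
    (F : Set (Set X)) (hF : F.Finite) (hFL : ∀ A ∈ F, A ∈ L) : ⋃₀ F ∈ L := by
  refine Set.Finite.induction_on (motive := fun F _ => (∀ A ∈ F, A ∈ L) → ⋃₀ F ∈ L) F hF
    (fun _ => by simpa using h.1) ?_ hFL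
  intro A F _ _ ih hFL
  rw [Set.sUnion_insert]
  exact (h.2.1 _ (hFL A (Set.mem_insert _ _)) _ (ih fun B hB => hFL B (Set.mem_insert_of_mem _ hB))).2

theorem regularity_axiom {X : Type*} (L : Set (Set X)) (h : IsLSS L)
    (U : Set (Set X)) (hU : Admissible L U)
    (W : Set X) (hW : W ⊆ ⋃₀ U)
    (hWU : ∀ V ∈ U, W ∩ V ∈ compatible L) :
    W ∈ compatible L := by
  intro M hM
  obtain ⟨F, hFU, hFfin, hEq⟩ := hU.2 M hM
  have key : W ∩ M = ⋃₀ ((fun V => W ∩ V ∩ M) '' F) := by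
    ext x
    simp only [Set.mem_sUnion, Set.mem_image, Set.mem_inter_iff]
    constructor
    · rintro ⟨hxW, hxM⟩
      have : x ∈ (⋃₀ F) ∩ M := by rw [← hEq]; exact ⟨hW hxW, hxM⟩
      obtain ⟨⟨V, hV, hxV⟩, -⟩ := this
      exact ⟨_, ⟨V, hV, rfl⟩, ⟨hxW, hxV⟩, hxM⟩
    · rintro ⟨_, ⟨V, hV, rfl⟩, ⟨hxW, -⟩, hxM⟩
      exact ⟨hxW, hxM⟩
  rw [key]
  exact finite_sUnion_mem L h _ (hFfin.image _)
    (by rintro _ ⟨V, hV, rfl⟩; exact hWU V (hFU hV) M hM)
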